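/- Let n ≥ 1 and let ι : ℝ^n \ {0} → ℝ^n \ {0} be the inversion ι(x) = x/|x|². Then for every set F ⊆ ℝ^n \ {0}: dim_A(ι(F)) = dim_A(F). -/

import Mathlib

open Set Metric
open scoped ENNReal

noncomputable section

/-- Covering number: the smallest number of sets of diameter at most `r` needed to
cover `F` (`∞` if no finite such cover exists). -/
def coverN {X : Type*} [PseudoMetricSpace X] (F : Set X) (r : ℝ) : ℝ≥0∞ :=
  sInf {m : ℝ≥0∞ | ∃ 𝒰 : Finset (Set X), (𝒰.card : ℝ≥0∞) = m ∧
    (∀ U ∈ 𝒰, EMetric.diam U ≤ ENNReal.ofReal r) ∧ F ⊆ ⋃ U ∈ 𝒰, U}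

/-- Regularized Assouad spectrum `dim_{A,reg}^θ(F)`. -/
def dimAreg {X : Type*} [PseudoMetricSpace X] (θ : ℝ) (F : Set X) : ℝ :=
  sInf {α : ℝ | 0 < α ∧ ∃ C : ℝ, 0 < C ∧ ∀ x ∈ F, ∀ r R : ℝ,
    0 < r → r ≤ R ^ (1/θ) → R ^ (1/θ) < R → R < 1 →
    coverN (closedBall x R ∩ F) r ≤ ENNReal.ofReal (C * (R/r) ^ α)}

/-- (Unregularized) Assouad spectrum `dim_A^θ(F)`. -/
def dimAspec {X : Type*} [PseudoMetricSpace X] (θ : ℝ) (F : Set X) : ℝ :=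
  sInf {α : ℝ | 0 < α ∧ ∃ C : ℝ, 0 < C ∧ ∀ x ∈ F, ∀ R : ℝ, 0 < R → R < 1 →
    coverN (closedBall x R ∩ F) (R ^ (1/θ)) ≤ ENNReal.ofReal (C * (R / R ^ (1/θ)) ^ α)}

/-- Upper box-counting dimension of a (bounded) set. -/
def dimBupper {X : Type*} [PseudoMetricSpace X] (F : Set X) : ℝ :=
  sInf {α : ℝ | 0 < α ∧ ∃ C : ℝ, 0 < C ∧ ∀ r : ℝ, 0 < r → r ≤ diam F →
    coverN F r ≤ ENNReal.ofReal (C * r ^ (-α))}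

/-- Assouad dimension. -/
def dimA {X : Type*} [PseudoMetricSpace X] (F : Set X) : ℝ :=
  sInf {α : ℝ | 0 < α ∧ ∃ C : ℝ, 0 < C ∧ ∀ x ∈ F, ∀ r R : ℝ, 0 < r → r ≤ R →
    coverN (closedBall x R ∩ F) r ≤ ENNReal.ofReal (C * (R/r) ^ α)}

/-- Quasi-Assouad dimension: `sup_{0<θ<1} dim_{A,reg}^θ(F)`. -/
def dimqA {X : Type*} [PseudoMetricSpace X] (F : Set X) : ℝ :=
  sSup ((fun θ => dimAreg θ F) '' Ioo (0:ℝ) 1)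

open Classical in
/-- Phase-transition parameter `ρ(F)`. -/
def rhoPT {X : Type*} [PseudoMetricSpace X] (F : Set X) : ℝ :=
  if ∃ θ ∈ Ioo (0:ℝ) 1, dimAreg θ F = dimqA F
  then sInf {θ | θ ∈ Ioo (0:ℝ) 1 ∧ dimAreg θ F = dimqA F}
  else 1

/-- The axes-parallel cube `Q(x,R) = ∏ [xᵢ - R, xᵢ + R]`. -/
def cubeQ {n : ℕ} (x : EuclideanSpace ℝ (Fin n)) (R : ℝ) : Set (EuclideanSpace ℝ (Fin n)) :=
  {y | ∀ i, x i - R ≤ y i ∧ y i ≤ x i + R}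

/-- The generation-`m` dyadic subcube of `Q(x,R)` with index `k`. -/
def dyadicCube {n : ℕ} (x : EuclideanSpace ℝ (Fin n)) (R : ℝ) (m : ℕ)
    (k : Fin n → Fin (2 ^ m)) : Set (EuclideanSpace ℝ (Fin n)) :=
  {y | ∀ i, x i - R + (k i : ℝ) * (2 * R / 2 ^ m) ≤ y i ∧
        y i ≤ x i - R + ((k i : ℝ) + 1) * (2 * R / 2 ^ m)}

/-- `N_d(B(x,R) ∩ F, m)`: the number of generation-`m` dyadic subcubes of `Q(x,R)`
that intersect `B(x,R) ∩ F`. -/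
def Nd {n : ℕ} (x : EuclideanSpace ℝ (Fin n)) (R : ℝ)
    (F : Set (EuclideanSpace ℝ (Fin n))) (m : ℕ) : ℕ :=
  Nat.card {k : Fin n → Fin (2 ^ m) // (dyadicCube x R m k ∩ (closedBall x R ∩ F)).Nonempty}

/-- `f` is `η`-quasisymmetric on the set `S`. -/
def QSOn {X Y : Type*} [PseudoMetricSpace X] [PseudoMetricSpace Y]
    (η : ℝ → ℝ) (f : X → Y) (S : Set X) : Prop :=
  ∀ x ∈ S, ∀ y ∈ S, ∀ z ∈ S, x ≠ z →
    dist (f x) (f y) ≤ η (dist x y / dist x z) * dist (f x) (f z)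

/-- Distance between two sets. -/
def setDist {X : Type*} [PseudoMetricSpace X] (A B : Set X) : ℝ :=
  sInf {d : ℝ | ∃ a ∈ A, ∃ b ∈ B, d = dist a b}

end

section helpers
variable {X : Type*} [PseudoMetricSpace X] {F A B : Set X} {r r' : ℝ}

lemma coverN_le_card (𝒰 : Finset (Set X))
    (hd : ∀ U ∈ 𝒰, EMetric.diam U ≤ ENNReal.ofReal r) (hc : F ⊆ ⋃ U ∈ 𝒰, U) :
    coverN F r ≤ 𝒰.card := sInf_le ⟨𝒰, rfl, hd, hc⟩

lemma coverN_empty : coverN (∅ : Set X) r = 0 := by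
  refine le_antisymm ?_ zero_le
  simpa using coverN_le_card (F := (∅ : Set X)) ∅ (by simp) (by simp)

lemma coverN_mono (h : A ⊆ B) : coverN A r ≤ coverN B r :=
  sInf_le_sInf fun m ⟨𝒰, h1, h2, h3⟩ => ⟨𝒰, h1, h2, h.trans h3⟩

lemma coverN_le_one (h : EMetric.diam F ≤ ENNReal.ofReal r) : coverN F r ≤ 1 := by
  simpa using coverN_le_card (F := F) {F} (by simpa using h) (by simp)

lemma coverN_attained (h : coverN F r ≠ ⊤) :
    ∃ 𝒰 : Finset (Set X), (𝒰.card : ℝ≥0∞) = coverN F r ∧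
      (∀ U ∈ 𝒰, EMetric.diam U ≤ ENNReal.ofReal r) ∧ F ⊆ ⋃ U ∈ 𝒰, U := by
  set S := {m : ℝ≥0∞ | ∃ 𝒰 : Finset (Set X), (𝒰.card : ℝ≥0∞) = m ∧
    (∀ U ∈ 𝒰, EMetric.diam U ≤ ENNReal.ofReal r) ∧ F ⊆ ⋃ U ∈ 𝒰, U} with hS
  have hco : coverN F r = sInf S := rfl
  have hlt : sInf S < ⊤ := by rw [← hco]; exact lt_top_iff_ne_top.2 h
  obtain ⟨m, hmS, -⟩ := sInf_lt_iff.1 hlt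
  set T := {k : ℕ | ∃ 𝒰 : Finset (Set X), 𝒰.card = k ∧
    (∀ U ∈ 𝒰, EMetric.diam U ≤ ENNReal.ofReal r) ∧ F ⊆ ⋃ U ∈ 𝒰, U} with hT
  have hTne : T.Nonempty := by
    obtain ⟨𝒰, h1, h2, h3⟩ := hmS
    exact ⟨𝒰.card, 𝒰, rfl, h2, h3⟩
  obtain ⟨𝒰, hcard, h2, h3⟩ := Nat.sInf_mem hTne
  refine ⟨𝒰, ?_, h2, h3⟩
  rw [hco]
  refine le_antisymm (le_sInf ?_) (sInf_le ⟨𝒰, rfl, h2, h3⟩)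
  rintro b ⟨𝒱, rfl, hb2, hb3⟩
  have : sInf T ≤ 𝒱.card := Nat.sInf_le ⟨𝒱, rfl, hb2, hb3⟩
  rw [hcard]
  exact_mod_cast this

lemma coverN_union_le : coverN (A ∪ B) r ≤ coverN A r + coverN B r := by
  classical
  rcases eq_or_ne (coverN A r) ⊤ with hA | hA
  · rw [hA]; simp
  rcases eq_or_ne (coverN B r) ⊤ with hB | hB
  · rw [hB]; simp
  obtain ⟨𝒰, hU1, hU2, hU3⟩ := coverN_attained hA
  obtain ⟨𝒱, hV1, hV2, hV3⟩ := coverN_attained hB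
  calc coverN (A ∪ B) r ≤ ((𝒰 ∪ 𝒱).card : ℝ≥0∞) := by
        refine coverN_le_card _ (fun U hU => ?_) ?_
        · rcases Finset.mem_union.1 hU with h | h
          exacts [hU2 U h, hV2 U h]
        · refine union_subset (hU3.trans ?_) (hV3.trans ?_) <;>
            · intro y hy
              simp only [Set.mem_iUnion, exists_prop] at hy ⊢
              obtain ⟨U, hU, hy⟩ := hy
              exact ⟨U, by simp [Finset.mem_union, hU], hy⟩
    _ ≤ (𝒰.card : ℝ≥0∞) + 𝒱.card := by
        exact_mod_cast Nat.cast_le.2 (Finset.card_union_le 𝒰 𝒱)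
    _ = coverN A r + coverN B r := by rw [hU1, hV1]

lemma coverN_biUnion_le {ι : Type*} (s : Finset ι) (A : ι → Set X) :
    coverN (⋃ i ∈ s, A i) r ≤ ∑ i ∈ s, coverN (A i) r := by
  classical
  induction s using Finset.induction_on with
  | empty => simp [coverN_empty]
  | insert a s hx ih =>
    rw [Finset.sum_insert hx]
    refine le_trans ?_ (add_le_add_right ih _)
    refine le_trans (coverN_mono ?_) coverN_union_le
    simp [Set.biUnion_insert]

lemma coverN_image_le {Y : Type*} [PseudoMetricSpace Y] {f : X → Y} {S : Set X}
    {L : ℝ} (hL : 0 ≤ L)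
    (hf : ∀ a ∈ S, ∀ b ∈ S, dist (f a) (f b) ≤ L * dist a b) (hr : 0 ≤ r)
    (hrr : L * r ≤ r') : coverN (f '' S) r' ≤ coverN S r := by
  classical
  refine le_sInf ?_
  rintro b ⟨𝒰, rfl, h2, h3⟩
  refine le_trans (coverN_le_card (𝒰.image fun U => f '' (U ∩ S)) ?_ ?_)
    (by exact_mod_cast Nat.cast_le.2 (Finset.card_image_le))
  · intro V hV
    obtain ⟨U, hU, rfl⟩ := Finset.mem_image.1 hV
    refine EMetric.diam_le ?_
    rintro p ⟨a, ⟨haU, haS⟩, rfl⟩ q ⟨b, ⟨hbU, hbS⟩, rfl⟩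
    rw [edist_dist]
    refine ENNReal.ofReal_le_ofReal (le_trans (hf a haS b hbS) ?_)
    have hab : dist a b ≤ r := by
      have := (EMetric.edist_le_diam_of_mem haU hbU).trans (h2 U hU)
      rw [edist_dist] at this
      exact (ENNReal.ofReal_le_ofReal_iff hr).1 this
    nlinarith [dist_nonneg (x := a) (y := b)]
  · rintro y ⟨a, haS, rfl⟩
    obtain ⟨U, hU⟩ := mem_iUnion.1 (h3 haS)
    obtain ⟨hU𝒰, haU⟩ := mem_iUnion.1 hU
    exact Set.mem_biUnion (Finset.mem_image_of_mem _ hU𝒰) (Set.mem_image_of_mem f ⟨haU, haS⟩)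

end helpers

abbrev EE (n : ℕ) := EuclideanSpace ℝ (Fin n)
noncomputable def iv {n : ℕ} (x : EE n) : EE n := (‖x‖ ^ 2)⁻¹ • x

variable {n : ℕ}

lemma norm_iv (x : EE n) : ‖iv x‖ = ‖x‖⁻¹ := by
  rcases eq_or_ne x 0 with rfl | hx
  · simp [iv]
  · have h : ‖x‖ ≠ 0 := norm_ne_zero_iff.2 hx
    simp [iv, norm_smul, abs_of_nonneg (by positivity : (0:ℝ) ≤ (‖x‖^2)⁻¹)]
    field_simp

lemma iv_iv {x : EE n} (hx : x ≠ 0) : iv (iv x) = x := by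
  have h : ‖x‖ ≠ 0 := norm_ne_zero_iff.2 hx
  simp only [iv, smul_smul]
  rw [show ‖(‖x‖ ^ 2)⁻¹ • x‖ = ‖x‖⁻¹ from norm_iv x,
    show ((‖x‖⁻¹ ^ 2)⁻¹ * (‖x‖ ^ 2)⁻¹ : ℝ) = 1 by field_simp, one_smul]

lemma iv_ne_zero {x : EE n} (hx : x ≠ 0) : iv x ≠ 0 := by
  have h : ‖x‖ ≠ 0 := norm_ne_zero_iff.2 hx
  simp [iv, smul_eq_zero, hx]

lemma dist_iv {x y : EE n} (hx : x ≠ 0) (hy : y ≠ 0) :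
    dist (iv x) (iv y) = dist x y / (‖x‖ * ‖y‖) := by
  have hxn : ‖x‖ ≠ 0 := norm_ne_zero_iff.2 hx
  have hyn : ‖y‖ ≠ 0 := norm_ne_zero_iff.2 hy
  have hsq : dist (iv x) (iv y) ^ 2 = (dist x y / (‖x‖ * ‖y‖)) ^ 2 := by
    rw [dist_eq_norm, dist_eq_norm, div_pow, @norm_sub_sq_real, @norm_sub_sq_real]
    simp only [iv, real_inner_smul_left, real_inner_smul_right, norm_smul,
      Real.norm_eq_abs, abs_of_nonneg (by positivity : (0:ℝ) ≤ (‖x‖^2)⁻¹),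
      abs_of_nonneg (by positivity : (0:ℝ) ≤ (‖y‖^2)⁻¹)]
    field_simp
    ring
  have h1 : (0:ℝ) ≤ dist (iv x) (iv y) := dist_nonneg
  have h2 : (0:ℝ) ≤ dist x y / (‖x‖ * ‖y‖) := by positivity
  nlinarith [sq_nonneg (dist (iv x) (iv y) - dist x y / (‖x‖ * ‖y‖))]

lemma norm_of_iv {y : EE n} (hy : y ≠ 0) : ‖y‖ = ‖iv y‖⁻¹ := by
  rw [norm_iv, inv_inv]

/-- The defining set for `dimA`. -/
def ASet {X : Type*} [PseudoMetricSpace X] (F : Set X) : Set ℝ :=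
  {α : ℝ | 0 < α ∧ ∃ C : ℝ, 0 < C ∧ ∀ x ∈ F, ∀ r R : ℝ, 0 < r → r ≤ R →
    coverN (closedBall x R ∩ F) r ≤ ENNReal.ofReal (C * (R/r) ^ α)}

lemma rpow_pow (x : ℝ) (hx : 0 ≤ x) (α : ℝ) (k : ℕ) : (x^k)^α = (x^α)^k := by
  induction k with
  | zero => simp
  | succ k ih => rw [pow_succ, pow_succ, Real.mul_rpow (by positivity) hx, ih]

lemma geomSumLe {x : ℝ} (h0 : 0 ≤ x) (h1 : x < 1) (m : ℕ) :
    ∑ i ∈ Finset.range m, x^i ≤ (1-x)⁻¹ := by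
  have hs : Summable fun i : ℕ => x ^ i := summable_geometric_of_lt_one h0 h1
  have := Summable.sum_le_tsum (Finset.range m) (fun i _ => by positivity) hs
  rwa [tsum_geometric_of_lt_one h0 h1] at this

/-- The key transfer estimate. -/
lemma transfer {F : Set (EE n)} {α C : ℝ}
    (h : ∀ x ∈ F, ∀ r R : ℝ, 0 < r → r ≤ R →
      coverN (closedBall x R ∩ F) r ≤ ENNReal.ofReal (C * (R/r) ^ α))
    {z : EE n} (hz : z ∈ F) {Rb m r' : ℝ} (hm : 0 < m) (hr' : 0 < r')
    (hρR : m^2*r' ≤ Rb) {T : Set (EE n)}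
    (hT : T ⊆ iv '' (closedBall z Rb ∩ F ∩ {y | m ≤ ‖y‖})) :
    coverN T r' ≤ ENNReal.ofReal (C * (Rb/(m^2*r')) ^ α) := by
  set S := closedBall z Rb ∩ F ∩ {y | m ≤ ‖y‖} with hSdef
  have hlip : ∀ a ∈ S, ∀ b ∈ S, dist (iv a) (iv b) ≤ (m⁻¹)^2 * dist a b := by
    rintro a ⟨⟨haB, haF⟩, ham⟩ b ⟨⟨hbB, hbF⟩, hbm⟩
    have ham' : m ≤ ‖a‖ := ham
    have hbm' : m ≤ ‖b‖ := hbm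
    have ha0 : a ≠ 0 := by
      intro e; rw [e, norm_zero] at ham'; linarith
    have hb0 : b ≠ 0 := by
      intro e; rw [e, norm_zero] at hbm'; linarith
    rw [dist_iv ha0 hb0]
    calc dist a b / (‖a‖ * ‖b‖) ≤ dist a b / (m * m) :=
          div_le_div_of_nonneg_left dist_nonneg (by positivity)
            (mul_le_mul ham' hbm' hm.le (norm_nonneg a))
      _ = (m⁻¹)^2 * dist a b := by field_simp
  calc coverN T r' ≤ coverN (iv '' S) r' := coverN_mono hT
    _ ≤ coverN S (m^2*r') := by
        refine coverN_image_le (by positivity) hlip (by positivity) ?_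
        rw [show (m⁻¹)^2 * (m^2*r') = r' by field_simp]
    _ ≤ coverN (closedBall z Rb ∩ F) (m^2*r') := coverN_mono inter_subset_left
    _ ≤ _ := h z hz _ _ (by positivity) hρR

lemma inv_antitone' {a b : ℝ} (ha : 0 < a) (h : a ≤ b) : b⁻¹ ≤ a⁻¹ := by
  have hb : 0 < b := lt_of_lt_of_le ha h
  rw [inv_le_inv₀ hb ha] at *
  · exact h

lemma norm_le_of_iv_ge {y : EE n} (hy : y ≠ 0) {a : ℝ} (ha : 0 < a)
    (h : a ≤ ‖iv y‖) : ‖y‖ ≤ a⁻¹ := by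
  rw [norm_of_iv hy]
  exact inv_antitone' ha h

lemma norm_ge_of_iv_le {y : EE n} (hy : y ≠ 0) {a : ℝ}
    (h : ‖iv y‖ ≤ a) : a⁻¹ ≤ ‖y‖ := by
  have h0 : 0 < ‖iv y‖ := norm_pos_iff.2 (iv_ne_zero hy)
  rw [norm_of_iv hy]
  exact inv_antitone' h0 h

set_option maxHeartbeats 2000000 in
lemma ASet_subset {F : Set (EE n)} (hF : ∀ x ∈ F, x ≠ 0) :
    ASet F ⊆ ASet (iv '' F) := by
  rintro α ⟨hα, C, hC, h⟩
  set s : ℝ := (2⁻¹ : ℝ) ^ α with hs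
  have hs0 : 0 ≤ s := Real.rpow_nonneg (by norm_num) _
  have hs1 : s < 1 := Real.rpow_lt_one (by norm_num) (by norm_num) hα
  have hden : 0 < 1 - s := by linarith
  have h12 : (0:ℝ) < (12:ℝ)^α := Real.rpow_pos_of_pos (by norm_num) _
  set D : ℝ := C * (12:ℝ)^α / (1 - s) + 1 with hD
  have hD0 : 0 < D := by
    have h1 : 0 ≤ C * (12:ℝ)^α / (1-s) := by positivity
    rw [hD]; linarith
  have hfrac : C * (12:ℝ)^α ≤ C * (12:ℝ)^α / (1-s) := by
    rw [le_div_iff₀ hden]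
    nlinarith [mul_nonneg (mul_nonneg hC.le h12.le) hs0]
  have hmem : ∀ y' ∈ iv '' F, ∃ y, y ∈ F ∧ y ≠ 0 ∧ y' = iv y ∧ ‖y'‖ = ‖y‖⁻¹ := by
    rintro y' ⟨y, hyF, rfl⟩
    exact ⟨y, hyF, hF y hyF, rfl, norm_iv y⟩
  refine ⟨hα, D, hD0, ?_⟩
  rintro x' ⟨x, hxF, rfl⟩ r' R' hr' hrR'
  have hx0 : x ≠ 0 := hF x hxF
  have ht0 : (0:ℝ) < ‖x‖ := norm_pos_iff.2 hx0
  set t : ℝ := ‖x‖ with ht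
  have hR'0 : 0 < R' := lt_of_lt_of_le hr' hrR'
  set q : ℝ := R'/r' with hqdef
  have hq1 : 1 ≤ q := (one_le_div hr').2 hrR'
  have hq0 : 0 < q := by linarith
  have hqα1 : 1 ≤ q ^ α := Real.one_le_rpow hq1 hα.le
  have hqα0 : 0 ≤ q ^ α := by linarith
  have hx'norm : ‖iv x‖ = t⁻¹ := norm_iv x
  by_cases hcase : R' ≤ (2*t)⁻¹
  · -- Case 1: the ball stays away from the origin
    have hsub : closedBall (iv x) R' ∩ iv '' F ⊆
        iv '' (closedBall x (2*t^2*R') ∩ F ∩ {y | 2*t/3 ≤ ‖y‖}) := by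
      rintro y' ⟨hyB, hyI⟩
      obtain ⟨y, hyF, hy0, rfl, hn⟩ := hmem _ hyI
      have hd : dist (iv x) (iv y) ≤ R' := by
        rw [dist_comm]; exact mem_closedBall.1 hyB
      have h2t : (0:ℝ) < (2*t)⁻¹ := by positivity
      have hivylow : (2*t)⁻¹ ≤ ‖iv y‖ := by
        have h1 : ‖iv x‖ ≤ dist (iv x) (iv y) + ‖iv y‖ := by
          have := dist_triangle (iv x) (iv y) 0
          simpa [dist_zero_right] using this
        have e : (2*t)⁻¹ + (2*t)⁻¹ = t⁻¹ := by rw [mul_inv]; ring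
        rw [hx'norm] at h1; linarith
      have hivyup : ‖iv y‖ ≤ 3/(2*t) := by
        have h1 : ‖iv y‖ ≤ dist (iv y) (iv x) + ‖iv x‖ := by
          have := dist_triangle (iv y) (iv x) 0
          simpa [dist_zero_right] using this
        rw [dist_comm] at h1
        rw [hx'norm] at h1
        have e : (2*t)⁻¹ + t⁻¹ = 3/(2*t) := by
          rw [mul_inv, div_eq_mul_inv, mul_inv]; ring
        linarith
      have hyup : ‖y‖ ≤ 2*t := by
        have := norm_le_of_iv_ge hy0 h2t hivylow
        rwa [inv_inv] at this
      have hylow : 2*t/3 ≤ ‖y‖ := by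
        have := norm_ge_of_iv_le hy0 hivyup
        rwa [inv_div] at this
      have hdxy : dist x y ≤ 2*t^2*R' := by
        have he := dist_iv hx0 hy0
        rw [eq_div_iff (mul_pos ht0 (norm_pos_iff.2 hy0)).ne'] at he
        have h1 : dist (iv x) (iv y) * (t * ‖y‖) ≤ R' * (t * (2*t)) := by
          have h2 : t * ‖y‖ ≤ t * (2*t) := by nlinarith
          have h3 : 0 ≤ t * ‖y‖ := by positivity
          exact mul_le_mul hd h2 h3 hR'0.le
        nlinarith [he]
      exact ⟨y, ⟨⟨mem_closedBall.2 (by rwa [dist_comm] at hdxy), hyF⟩, hylow⟩, rfl⟩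
    have key := transfer h hxF (Rb := 2*t^2*R') (m := 2*t/3) (by positivity) hr'
      (by nlinarith [mul_le_mul_of_nonneg_left hrR' (by positivity : (0:ℝ) ≤ t^2)]) hsub
    refine le_trans key (ENNReal.ofReal_le_ofReal ?_)
    have heq : (2*t^2*R')/((2*t/3)^2 * r') = (9/2) * q := by
      rw [hqdef]; field_simp; ring
    rw [heq, Real.mul_rpow (by norm_num) hq0.le]
    have h92 : ((9:ℝ)/2)^α ≤ (12:ℝ)^α :=
      Real.rpow_le_rpow (by norm_num) (by norm_num) hα.le
    have hCD : C * ((9:ℝ)/2)^α ≤ D := by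
      have e1 : C * ((9:ℝ)/2)^α ≤ C * 12^α := by nlinarith
      rw [hD]; linarith
    nlinarith [hCD, hqα1, hqα0]
  · -- Case 2: the ball comes close to the origin
    push_neg at hcase
    have hxlt : t⁻¹ < 2*R' := by
      have e : t⁻¹ = 2*(2*t)⁻¹ := by rw [mul_inv]; ring
      linarith
    obtain ⟨K, hK1, hK2⟩ : ∃ K : ℕ, 6*R'/r' ≤ (2:ℝ)^(K+1) ∧
        ∀ k : ℕ, k ≤ K → (2:ℝ)^k ≤ 12*R'/r' := by
      have hex : ∃ K : ℕ, 6*R'/r' ≤ (2:ℝ)^(K+1) := by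
        obtain ⟨N, hN⟩ := pow_unbounded_of_one_lt (6*R'/r') (by norm_num : (1:ℝ) < 2)
        exact ⟨N, le_trans hN.le (pow_le_pow_right₀ (by norm_num) (Nat.le_succ N))⟩
      classical
      refine ⟨Nat.find hex, Nat.find_spec hex, fun k hk => ?_⟩
      have e12 : 12*R'/r' = 12*q := by rw [hqdef]; ring
      rcases Nat.eq_zero_or_pos k with rfl | hkpos
      · rw [pow_zero, e12]; linarith
      · have hklt : k - 1 < Nat.find hex := by omega
        have hmin := Nat.find_min hex hklt
        push_neg at hmin
        rw [show k - 1 + 1 = k by omega] at hmin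
        have e6 : 6*R'/r' = 6*q := by rw [hqdef]; ring
        rw [e6] at hmin; rw [e12]; linarith
    set A : ℕ → Set (EE n) := fun k => (closedBall (iv x) R' ∩ iv '' F) ∩
      {y' | 3*R'/2^(k+1) ≤ ‖y'‖ ∧ ‖y'‖ ≤ 3*R'/2^k} with hA
    set Cent : Set (EE n) := (closedBall (iv x) R' ∩ iv '' F) ∩
      {y' | ‖y'‖ ≤ 3*R'/2^(K+1)} with hCe
    have hcover : closedBall (iv x) R' ∩ iv '' F ⊆
        (⋃ k ∈ Finset.range (K+1), A k) ∪ Cent := by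
      rintro y' ⟨hy'B, hy'F⟩
      by_cases hyc : ‖y'‖ ≤ 3*R'/2^(K+1)
      · exact Or.inr ⟨⟨hy'B, hy'F⟩, hyc⟩
      push_neg at hyc
      have hy'lt : ‖y'‖ < 3*R' := by
        have h1 : ‖y'‖ ≤ dist y' (iv x) + ‖iv x‖ := by
          have := dist_triangle y' (iv x) 0
          simpa [dist_zero_right] using this
        have h2 : dist y' (iv x) ≤ R' := mem_closedBall.1 hy'B
        rw [hx'norm] at h1; linarith
      have hex2 : ∃ j : ℕ, 3*R'/2^(j+1) < ‖y'‖ := ⟨K, hyc⟩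
      classical
      have hm1 : 3*R'/2^(Nat.find hex2 + 1) < ‖y'‖ := Nat.find_spec hex2
      have hmK : Nat.find hex2 ≤ K := Nat.find_min' hex2 hyc
      have hm2 : ‖y'‖ ≤ 3*R'/2^(Nat.find hex2) := by
        rcases Nat.eq_zero_or_pos (Nat.find hex2) with hm0 | hmpos
        · rw [hm0, pow_zero, div_one]; linarith
        · have hmin := Nat.find_min hex2 (show Nat.find hex2 - 1 < Nat.find hex2 by omega)
          push_neg at hmin
          rwa [show Nat.find hex2 - 1 + 1 = Nat.find hex2 by omega] at hmin
      exact Or.inl (Set.mem_biUnion (Finset.mem_range.2 (by omega))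
        ⟨⟨hy'B, hy'F⟩, hm1.le, hm2⟩)
    have hann : ∀ k : ℕ, k ≤ K →
        coverN (A k) r' ≤ ENNReal.ofReal (C * (12 * q * ((2:ℝ)⁻¹)^k)^α) := by
      intro k hk
      have hpk : (0:ℝ) < 2^k := by positivity
      rcases eq_empty_or_nonempty (A k) with he | hne
      · rw [he, coverN_empty]; exact zero_le
      obtain ⟨y0, ⟨h0B, h0F⟩, h0lo, h0hi⟩ := hne
      obtain ⟨z, hzF, hz0, h0eq, hzn⟩ := hmem _ h0F
      rw [h0eq] at h0lo h0hi
      have hpk1 : (0:ℝ) < 3*R'/2^(k+1) := by positivity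
      have hzup : ‖z‖ ≤ 2^(k+1)/(3*R') := by
        have := norm_le_of_iv_ge hz0 hpk1 h0lo
        rwa [inv_div] at this
      have hsub2 : A k ⊆ iv ''
          (closedBall z (2^(k+2)/(3*R')) ∩ F ∩ {y | 2^k/(3*R') ≤ ‖y‖}) := by
        rintro y' ⟨⟨hyB, hyI⟩, hylo, hyhi⟩
        obtain ⟨y, hyF, hy0, rfl, hn⟩ := hmem _ hyI
        have hyup : ‖y‖ ≤ 2^(k+1)/(3*R') := by
          have := norm_le_of_iv_ge hy0 hpk1 hylo
          rwa [inv_div] at this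
        have hylow : 2^k/(3*R') ≤ ‖y‖ := by
          have := norm_ge_of_iv_le hy0 hyhi
          rwa [inv_div] at this
        have hdzy : dist z y ≤ 2^(k+2)/(3*R') := by
          have h1 : dist z y ≤ ‖z‖ + ‖y‖ := by
            rw [dist_eq_norm]
            exact norm_sub_le z y
          have e : (2:ℝ)^(k+1)/(3*R') + 2^(k+1)/(3*R') = 2^(k+2)/(3*R') := by
            rw [← add_div, show (2:ℝ)^(k+2) = 2^(k+1) + 2^(k+1) by ring]
          linarith
        exact ⟨y, ⟨⟨mem_closedBall.2 (by rwa [dist_comm] at hdzy), hyF⟩, hylow⟩, rfl⟩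
      have hρR : ((2:ℝ)^k/(3*R'))^2 * r' ≤ 2^(k+2)/(3*R') := by
        have hkr : (2:ℝ)^k * r' ≤ 12*R' := by
          have := hK2 k hk
          rw [le_div_iff₀ hr'] at this
          linarith
        rw [div_pow, div_mul_eq_mul_div, div_le_div_iff₀ (by positivity) (by positivity)]
        have e2 : (2:ℝ)^(k+2) = 4*2^k := by ring
        rw [e2]
        nlinarith [mul_le_mul_of_nonneg_right hkr (by positivity : (0:ℝ) ≤ 3*R'*2^k)]
      have key := transfer h hzF (Rb := 2^(k+2)/(3*R')) (m := 2^k/(3*R'))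
        (by positivity) hr' hρR hsub2
      have hbase : ((2:ℝ)^(k+2)/(3*R'))/(((2:ℝ)^k/(3*R'))^2 * r') = 12*q*((2:ℝ)⁻¹)^k := by
        rw [hqdef, inv_pow]
        field_simp
        ring
      rwa [hbase] at key
    have hCent : coverN Cent r' ≤ 1 := by
      refine coverN_le_one (EMetric.diam_le ?_)
      rintro a ⟨-, ha⟩ b ⟨-, hb⟩
      rw [edist_dist]
      refine ENNReal.ofReal_le_ofReal ?_
      have h1 : dist a b ≤ ‖a‖ + ‖b‖ := by
        rw [dist_eq_norm]; exact norm_sub_le a b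
      have ha' : ‖a‖ ≤ 3*R'/2^(K+1) := ha
      have hb' : ‖b‖ ≤ 3*R'/2^(K+1) := hb
      have hp : (0:ℝ) < 2^(K+1) := by positivity
      have h6 : 6*R' ≤ 2^(K+1) * r' := by
        have := (div_le_iff₀ hr').1 hK1
        linarith
      have h2 : 3*R'/2^(K+1) + 3*R'/2^(K+1) ≤ r' := by
        rw [← add_div, div_le_iff₀ hp]
        linarith
      linarith
    calc coverN (closedBall (iv x) R' ∩ iv '' F) r'
        ≤ coverN ((⋃ k ∈ Finset.range (K+1), A k) ∪ Cent) r' := coverN_mono hcover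
      _ ≤ coverN (⋃ k ∈ Finset.range (K+1), A k) r' + coverN Cent r' := coverN_union_le
      _ ≤ (∑ k ∈ Finset.range (K+1), coverN (A k) r') + 1 :=
            add_le_add (coverN_biUnion_le _ _) hCent
      _ ≤ (∑ k ∈ Finset.range (K+1),
            ENNReal.ofReal (C * (12*q*((2:ℝ)⁻¹)^k)^α)) + 1 := by
            refine add_le_add_left (Finset.sum_le_sum fun k hk => hann k ?_) 1
            exact Nat.lt_succ_iff.1 (Finset.mem_range.1 hk)
      _ ≤ ENNReal.ofReal (D * q^α) := by
            rw [show (1:ℝ≥0∞) = ENNReal.ofReal 1 by simp,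
              ← ENNReal.ofReal_sum_of_nonneg (fun k _ => by positivity),
              ← ENNReal.ofReal_add (by positivity) zero_le_one]
            refine ENNReal.ofReal_le_ofReal ?_
            have hterm : ∀ k : ℕ, C * (12*q*((2:ℝ)⁻¹)^k)^α = (C * (12*q)^α) * s^k := by
              intro k
              rw [Real.mul_rpow (by positivity) (by positivity),
                rpow_pow _ (by norm_num) α k, hs]
              ring
            have hsum : ∑ k ∈ Finset.range (K+1), C * (12*q*((2:ℝ)⁻¹)^k)^α
                ≤ (C * (12*q)^α) * (1-s)⁻¹ := by
              calc ∑ k ∈ Finset.range (K+1), C * (12*q*((2:ℝ)⁻¹)^k)^α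
                  = (C * (12*q)^α) * ∑ k ∈ Finset.range (K+1), s^k := by
                    rw [Finset.mul_sum]
                    exact Finset.sum_congr rfl fun k _ => hterm k
                _ ≤ _ := mul_le_mul_of_nonneg_left (geomSumLe hs0 hs1 _) (by positivity)
            have h12q : C * (12*q)^α = C * 12^α * q^α := by
              rw [Real.mul_rpow (by norm_num) hq0.le]; ring
            have e1 : C * 12^α * q^α * (1-s)⁻¹ = (C * 12^α/(1-s)) * q^α := by
              field_simp
            have hend : C * 12^α * q^α * (1-s)⁻¹ + 1 ≤ D * q^α := by
              rw [e1, hD]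
              have hnn : (0:ℝ) ≤ C * 12^α/(1-s) :=
                div_nonneg (by positivity) hden.le
              nlinarith [mul_nonneg hnn (sub_nonneg.2 hqα1)]
            rw [h12q] at hsum
            linarith [hsum, hend]

lemma iv_image_image {F : Set (EE n)} (hF : ∀ x ∈ F, x ≠ 0) : iv '' (iv '' F) = F := by
  ext y
  constructor
  · rintro ⟨y1, ⟨y2, hy2F, rfl⟩, rfl⟩
    rw [iv_iv (hF y2 hy2F)]
    exact hy2F
  · intro hy
    exact ⟨iv y, ⟨y, hy, rfl⟩, iv_iv (hF y hy)⟩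

/-- invariance of Assouad dimension under the inversion `x ↦ x/|x|²`. -/
theorem stmt19 {n : ℕ} (hn : 1 ≤ n) (F : Set (EuclideanSpace ℝ (Fin n)))
    (hF : ∀ x ∈ F, x ≠ 0) :
    dimA ((fun x : EuclideanSpace ℝ (Fin n) => (‖x‖ ^ 2)⁻¹ • x) '' F) = dimA F := by
  have hG : ∀ y ∈ iv '' F, y ≠ 0 := by rintro y ⟨x, hx, rfl⟩; exact iv_ne_zero (hF x hx)
  have e1 := ASet_subset hF
  have e2 := ASet_subset hG
  rw [iv_image_image hF] at e2
  have heq : ASet (iv '' F) = ASet F := Set.Subset.antisymm e2 e1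
  show sInf (ASet (iv '' F)) = sInf (ASet F)
  rw [heq]
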